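/- For every constant A ≥ 0 one has φ_A'(x) < 0 and φ_A''(x) > 0 for all x ≥ 0; in particular φ_A is strictly decreasing and strictly convex on [0,∞). -/

import Mathlib

open Set Filter

/-- If `deriv g x < 0` then `g` is strictly decreasing on a neighborhood of `x`. -/
lemma strictAntiOn_nbhd {g : ℝ → ℝ} (hgd : Differentiable ℝ g) (hg : Continuous (deriv g))
    {x : ℝ} (h : deriv g x < 0) :
    ∃ δ > (0:ℝ), StrictAntiOn g (Icc (x - δ) (x + δ)) := by
  have hU : IsOpen {y : ℝ | deriv g y < 0} := isOpen_lt hg continuous_const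
  obtain ⟨ε, hε, hball⟩ := Metric.isOpen_iff.mp hU x h
  refine ⟨ε/2, by linarith, strictAntiOn_of_deriv_neg (convex_Icc _ _)
    hgd.continuous.continuousOn ?_⟩
  intro y hy
  rw [interior_Icc] at hy
  apply hball
  rw [Metric.mem_ball, Real.dist_eq, abs_lt]
  exact ⟨by linarith [hy.1], by linarith [hy.2]⟩

lemma strictMonoOn_nbhd {g : ℝ → ℝ} (hgd : Differentiable ℝ g) (hg : Continuous (deriv g))
    {x : ℝ} (h : 0 < deriv g x) :
    ∃ δ > (0:ℝ), StrictMonoOn g (Icc (x - δ) (x + δ)) := by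
  have hU : IsOpen {y : ℝ | 0 < deriv g y} := isOpen_lt continuous_const hg
  obtain ⟨ε, hε, hball⟩ := Metric.isOpen_iff.mp hU x h
  refine ⟨ε/2, by linarith, strictMonoOn_of_deriv_pos (convex_Icc _ _)
    hgd.continuous.continuousOn ?_⟩
  intro y hy
  rw [interior_Icc] at hy
  apply hball
  rw [Metric.mem_ball, Real.dist_eq, abs_lt]
  exact ⟨by linarith [hy.1], by linarith [hy.2]⟩

lemma exists_right_lt {g : ℝ → ℝ} (hgd : Differentiable ℝ g) (hg : Continuous (deriv g))
    {x : ℝ} (h : deriv g x < 0) : ∃ y > x, g y < g x := by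
  obtain ⟨δ, hδ, hs⟩ := strictAntiOn_nbhd hgd hg h
  exact ⟨x + δ, by linarith,
    hs (⟨by linarith, by linarith⟩ : x ∈ Icc (x - δ) (x + δ))
      (⟨by linarith, by linarith⟩ : x + δ ∈ Icc (x - δ) (x + δ)) (by linarith)⟩

lemma exists_right_gt {g : ℝ → ℝ} (hgd : Differentiable ℝ g) (hg : Continuous (deriv g))
    {x : ℝ} (h : 0 < deriv g x) : ∃ y > x, g x < g y := by
  obtain ⟨δ, hδ, hs⟩ := strictMonoOn_nbhd hgd hg h
  exact ⟨x + δ, by linarith,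
    hs (⟨by linarith, by linarith⟩ : x ∈ Icc (x - δ) (x + δ))
      (⟨by linarith, by linarith⟩ : x + δ ∈ Icc (x - δ) (x + δ)) (by linarith)⟩

lemma exists_left_gt {g : ℝ → ℝ} (hgd : Differentiable ℝ g) (hg : Continuous (deriv g))
    {x a : ℝ} (ha : a < x) (h : deriv g x < 0) : ∃ y, a < y ∧ y < x ∧ g x < g y := by
  obtain ⟨δ, hδ, hs⟩ := strictAntiOn_nbhd hgd hg h
  refine ⟨max ((a + x)/2) (x - δ), lt_max_iff.mpr (Or.inl (by linarith)), ?_, ?_⟩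
  · apply max_lt <;> linarith
  · refine hs ⟨le_max_right _ _, ?_⟩
      (⟨by linarith, by linarith⟩ : x ∈ Icc (x - δ) (x + δ)) ?_
    · exact max_le (by linarith) (by linarith)
    · apply max_lt <;> linarith

/-- for every A ≥ 0, φ_A' < 0 and φ_A'' > 0 on [0,∞); in particular
φ_A is strictly decreasing and strictly convex on [0,∞). -/
theorem stmt_9
    (r : ℝ) (hr : 0 < r)
    (μ σ : ℝ → ℝ) (hμ : ContDiff ℝ 1 μ) (hσ : ContDiff ℝ 1 σ)
    (hσpos : ∀ x ≥ (0:ℝ), 0 < σ x ^ 2)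
    (hμderiv : ∀ x ≥ (0:ℝ), deriv μ x < r)
    (φ : ℝ → ℝ → ℝ)
    (hφC : ∀ A ≥ (0:ℝ), ContDiff ℝ 3 (φ A))
    (hφ0 : ∀ A ≥ (0:ℝ), φ A 0 = 1)
    (hφpos : ∀ A ≥ (0:ℝ), ∀ x ≥ (0:ℝ), 0 < φ A x)
    (hφanti : ∀ A ≥ (0:ℝ), AntitoneOn (φ A) (Ici (0:ℝ)))
    (hφlim : ∀ A ≥ (0:ℝ), Tendsto (φ A) atTop (nhds 0))
    (hφODE : ∀ A ≥ (0:ℝ), ∀ x ≥ (0:ℝ),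
      (1/2) * σ x ^ 2 * deriv (deriv (φ A)) x + (μ x - A) * deriv (φ A) x - r * φ A x = 0) :
    ∀ A ≥ (0:ℝ),
      (∀ x ≥ (0:ℝ), deriv (φ A) x < 0) ∧
      (∀ x ≥ (0:ℝ), 0 < deriv (deriv (φ A)) x) ∧
      StrictAntiOn (φ A) (Ici (0:ℝ)) ∧
      StrictConvexOn ℝ (Ici (0:ℝ)) (φ A) := by
  intro A hA
  have hfC : ContDiff ℝ 3 (φ A) := hφC A hA
  set f : ℝ → ℝ := φ A with hf_def
  set f1 : ℝ → ℝ := deriv f with hf1_def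
  set f2 : ℝ → ℝ := deriv f1 with hf2_def
  set f3 : ℝ → ℝ := deriv f2 with hf3_def
  -- smoothness chain
  have h3 : ContDiff ℝ (2+1) f := by
    have : ((2:WithTop ℕ∞)+1) = 3 := by norm_num
    rw [this]; exact hfC
  obtain ⟨hfd, -, hf1C⟩ := contDiff_succ_iff_deriv.mp h3
  rw [← hf1_def] at hf1C
  have h2 : ContDiff ℝ (1+1) f1 := by
    have : ((1:WithTop ℕ∞)+1) = 2 := by norm_num
    rw [this]; exact hf1C
  obtain ⟨hf1d, -, hf2C⟩ := contDiff_succ_iff_deriv.mp h2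
  rw [← hf2_def] at hf2C
  obtain ⟨hf2d, hf3c⟩ := contDiff_one_iff_deriv.mp hf2C
  rw [← hf3_def] at hf3c
  have hf1c : Continuous f1 := hf1C.continuous
  have hf2c : Continuous f2 := hf2C.continuous
  have hμd : Differentiable ℝ μ := hμ.differentiable one_ne_zero
  have hσd : Differentiable ℝ σ := hσ.differentiable one_ne_zero
  have ode : ∀ x ≥ (0:ℝ), (1/2) * σ x ^ 2 * f2 x + (μ x - A) * f1 x - r * f x = 0 :=
    hφODE A hA
  -- differentiated ODE
  have dode : ∀ x ≥ (0:ℝ),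
      ((1/2) * (2 * σ x * deriv σ x) * f2 x + (1/2) * σ x ^ 2 * f3 x)
        + (deriv μ x * f1 x + (μ x - A) * f2 x) - r * f1 x = 0 := by
    intro x hx
    have hσ2 : HasDerivAt (fun y => σ y ^ 2) (2 * σ x * deriv σ x) x := by
      simpa [mul_comm, mul_assoc, mul_left_comm] using ((hσd x).hasDerivAt).fun_pow 2
    have hterm1 : HasDerivAt (fun y => (1/2) * σ y ^ 2 * f2 y)
        ((1/2) * (2 * σ x * deriv σ x) * f2 x + (1/2) * σ x ^ 2 * f3 x) x :=
      (hσ2.const_mul (1/2)).mul ((hf2d x).hasDerivAt)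
    have hterm2 : HasDerivAt (fun y => (μ y - A) * f1 y)
        (deriv μ x * f1 x + (μ x - A) * f2 x) x :=
      (((hμd x).hasDerivAt).sub_const A).mul ((hf1d x).hasDerivAt)
    have hterm3 : HasDerivAt (fun y => r * f y) (r * f1 x) x :=
      ((hfd x).hasDerivAt).const_mul r
    have hg : HasDerivAt (fun y => (1/2) * σ y ^ 2 * f2 y + (μ y - A) * f1 y - r * f y)
        (((1/2) * (2 * σ x * deriv σ x) * f2 x + (1/2) * σ x ^ 2 * f3 x)
          + (deriv μ x * f1 x + (μ x - A) * f2 x) - r * f1 x) x :=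
      (hterm1.add hterm2).sub hterm3
    have h0 : HasDerivWithinAt (fun _ : ℝ => (0:ℝ))
        (((1/2) * (2 * σ x * deriv σ x) * f2 x + (1/2) * σ x ^ 2 * f3 x)
          + (deriv μ x * f1 x + (μ x - A) * f2 x) - r * f1 x) (Ici 0) x :=
      hg.hasDerivWithinAt.congr (fun y hy => (ode y hy).symm) ((ode x hx).symm)
    have hu : UniqueDiffWithinAt ℝ (Ici (0:ℝ)) x := uniqueDiffOn_Ici 0 x hx
    have hz : HasDerivWithinAt (fun _ : ℝ => (0:ℝ)) 0 (Ici 0) x :=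
      (hasDerivAt_const x (0:ℝ)).hasDerivWithinAt
    exact (h0.derivWithin hu).symm.trans (hz.derivWithin hu)
  -- step 1 : f1 ≤ 0 on [0,∞)
  have h1np : ∀ x ≥ (0:ℝ), f1 x ≤ 0 := by
    intro x hx
    by_contra h
    push_neg at h
    have hf1c' : Continuous (deriv f) := hf1c
    obtain ⟨y, hy, hlt⟩ := exists_right_gt hfd hf1c' h
    exact absurd (hφanti A hA hx (le_trans hx (le_of_lt hy)) (le_of_lt hy)) (not_le.mpr hlt)
  -- step 2 : f1 < 0 on [0,∞)
  have h1neg : ∀ x ≥ (0:ℝ), f1 x < 0 := by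
    intro x hx
    rcases lt_or_eq_of_le (h1np x hx) with h | h
    · exact h
    · exfalso
      have hφp : 0 < f x := hφpos A hA x hx
      have hσp := hσpos x hx
      have he : (1/2) * σ x ^ 2 * f2 x = r * f x := by
        have h6 := ode x hx
        rw [h] at h6
        linarith
      have h2p : 0 < f2 x := by nlinarith [he, mul_pos hr hφp, hσp]
      have hf2c' : Continuous (deriv f1) := hf2c
      obtain ⟨y, hy, hlt⟩ := exists_right_gt hf1d hf2c' h2p
      have hlt : f1 x < f1 y := hlt
      rw [h] at hlt
      exact absurd (h1np y (le_trans hx (le_of_lt hy))) (not_le.mpr hlt)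
  -- key : at a zero of f2 (for x ≥ 0), f3 < 0
  have hkey : ∀ x ≥ (0:ℝ), f2 x = 0 → f3 x < 0 := by
    intro x hx h0
    have hd := dode x hx
    rw [h0] at hd
    have hσp := hσpos x hx
    have hμ' := hμderiv x hx
    have hf1n := h1neg x hx
    nlinarith [mul_pos (sub_pos.mpr hμ') (neg_pos.mpr hf1n)]
  -- step 3 : f2 > 0 on [0,∞)
  have h2pos : ∀ x ≥ (0:ℝ), 0 < f2 x := by
    intro x₀ hx₀
    by_contra h
    push_neg at h
    -- find x₁ ≥ 0 with f2 x₁ < 0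
    obtain ⟨x₁, hx₁, hfx₁⟩ : ∃ x₁ ≥ (0:ℝ), f2 x₁ < 0 := by
      rcases lt_or_eq_of_le h with h' | h'
      · exact ⟨x₀, hx₀, h'⟩
      · have hf3c' : Continuous (deriv f2) := hf3c
        obtain ⟨y, hy, hlt⟩ := exists_right_lt hf2d hf3c' (hkey x₀ hx₀ h')
        have hlt : f2 y < f2 x₀ := hlt
        exact ⟨y, le_trans hx₀ (le_of_lt hy), by rw [h'] at hlt; exact hlt⟩
    -- f2 < 0 on [x₁, ∞)
    have hneg : ∀ x ≥ x₁, f2 x < 0 := by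
      by_contra hc
      push_neg at hc
      obtain ⟨z, hz, hz0⟩ := hc
      set T : Set ℝ := Ici x₁ ∩ f2 ⁻¹' (Ici 0) with hT
      have hTclosed : IsClosed T := isClosed_Ici.inter (isClosed_Ici.preimage hf2c)
      have hTne : T.Nonempty := ⟨z, hz, hz0⟩
      have hTbdd : BddBelow T := ⟨x₁, fun y hy => hy.1⟩
      set c := sInf T with hc_def
      have hcT : c ∈ T := hTclosed.csInf_mem hTne hTbdd
      have hcx₁ : x₁ < c := by
        rcases lt_or_eq_of_le (show x₁ ≤ c from hcT.1) with h' | h'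
        · exact h'
        · exact absurd hcT.2 (by simpa [← h'] using not_le.mpr hfx₁)
      have hbelow : ∀ y, x₁ ≤ y → y < c → f2 y < 0 := by
        intro y hy₁ hyc
        by_contra hy
        push_neg at hy
        exact absurd (csInf_le hTbdd ⟨hy₁, hy⟩) (not_le.mpr hyc)
      -- f2 c ≤ 0 by left limit
      have hc_le : f2 c ≤ 0 := by
        have hclos : c ∈ closure (Ico x₁ c) := by
          rw [closure_Ico (ne_of_lt hcx₁)]
          exact ⟨le_of_lt hcx₁, le_refl _⟩
        haveI hne : (nhdsWithin c (Ico x₁ c)).NeBot :=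
          mem_closure_iff_nhdsWithin_neBot.mp hclos
        have ht : Tendsto f2 (nhdsWithin c (Ico x₁ c)) (nhds (f2 c)) :=
          (hf2c.continuousWithinAt)
        refine le_of_tendsto ht ?_
        filter_upwards [self_mem_nhdsWithin] with y hy
        exact le_of_lt (hbelow y hy.1 hy.2)
      have hc0 : f2 c = 0 := le_antisymm hc_le hcT.2
      have hc3 : f3 c < 0 := hkey c (le_trans hx₁ (le_of_lt hcx₁)) hc0
      have hf3c' : Continuous (deriv f2) := hf3c
      obtain ⟨y, hy₁, hyc, hlt⟩ := exists_left_gt hf2d hf3c' hcx₁ hc3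
      have hlt : f2 c < f2 y := hlt
      rw [hc0] at hlt
      exact absurd (hbelow y (le_of_lt hy₁) hyc) (not_lt.mpr (le_of_lt hlt))
    -- f1 is antitone on [x₁, ∞)
    have hf1anti : AntitoneOn f1 (Ici x₁) :=
      antitoneOn_of_deriv_nonpos (convex_Ici x₁) hf1c.continuousOn
        (fun y _ => (hf1d y).differentiableWithinAt)
        (fun y hy => by
          rw [interior_Ici] at hy
          exact le_of_lt (show deriv f1 y < 0 from hneg y (le_of_lt hy)))
    set c := f1 x₁ with hcdef
    have hcneg : c < 0 := h1neg x₁ hx₁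
    have hf1le : ∀ x ≥ x₁, f1 x ≤ c := fun x hx => hf1anti (le_refl x₁ : x₁ ∈ Ici x₁) hx hx
    -- H y = f y - c * y is antitone on [x₁, ∞)
    have hH : ∀ y : ℝ, HasDerivAt (fun t => f t - c * t) (f1 y - c) y := by
      intro y
      simpa using ((hfd y).hasDerivAt).fun_sub ((hasDerivAt_id y).const_mul c)
    have hHanti : AntitoneOn (fun t => f t - c * t) (Ici x₁) :=
      antitoneOn_of_deriv_nonpos (convex_Ici x₁)
        ((hfd.continuous.sub (continuous_const.mul continuous_id)).continuousOn)
        (fun y _ => (hH y).differentiableAt.differentiableWithinAt)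
        (fun y hy => by
          rw [interior_Ici] at hy
          rw [(hH y).deriv]
          linarith [hf1le y (le_of_lt hy)])
    -- contradiction with positivity of f
    set x := x₁ + (f x₁ + 1) / (-c) with hxdef
    have hfx₁pos : 0 < f x₁ := hφpos A hA x₁ hx₁
    have hfrac : 0 < (f x₁ + 1) / (-c) := div_pos (by linarith) (by linarith)
    have hxge : x₁ ≤ x := by rw [hxdef]; linarith
    have hineq := hHanti (le_refl x₁ : x₁ ∈ Ici x₁) hxge hxge
    have hcne : c ≠ 0 := ne_of_lt hcneg
    have hq : c * ((f x₁ + 1) / (-c)) = -(f x₁ + 1) := by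
      rw [mul_div_assoc', div_neg, mul_div_cancel_left₀ _ hcne]
    have hcx : c * x = c * x₁ - (f x₁ + 1) := by
      rw [hxdef, mul_add, hq]; ring
    have hfxpos : 0 < f x := hφpos A hA x (le_trans hx₁ hxge)
    simp only [hcx] at hineq
    linarith
  -- conclusions
  refine ⟨h1neg, h2pos, ?_, ?_⟩
  · exact strictAntiOn_of_deriv_neg (convex_Ici 0) hfd.continuous.continuousOn
      (fun x hx => h1neg x (le_of_lt (by rwa [interior_Ici] at hx)))
  · refine strictConvexOn_of_deriv2_pos (convex_Ici 0) hfd.continuous.continuousOn ?_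
    intro x hx
    rw [interior_Ici] at hx
    have : deriv^[2] f = f2 := rfl
    rw [this]
    exact h2pos x (le_of_lt hx)
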